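/- If X is an invertible object in a symmetric monoidal category, then tr(id_X) ∘ tr(id_X) = id_S; that is, the trace of the identity on X is an automorphism of S of order dividing 2. -/

import Mathlib

open CategoryTheory MonoidalCategory

variable {C : Type*} [Category C] [MonoidalCategory C] [SymmetricCategory C]

/-- Left dual data for `X`. -/
structure LeftDualData (X : C) where
  Y : C
  α : 𝟙_ C ⟶ Y ⊗ X
  αhat : X ⊗ Y ⟶ 𝟙_ C
  triangle₁ : (ρ_ X).inv ≫ (X ◁ α) ≫ (α_ X Y X).inv ≫ (αhat ▷ X) ≫ (λ_ X).hom = 𝟙 X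
  triangle₂ : (λ_ Y).inv ≫ (α ▷ Y) ≫ (α_ Y X Y).hom ≫ (Y ◁ αhat) ≫ (ρ_ Y).hom = 𝟙 Y

/-- The trace of `f : X ⟶ X` with respect to a left dual of `X`. -/
def trOf {X : C} (D : LeftDualData X) (f : X ⟶ X) : 𝟙_ C ⟶ 𝟙_ C :=
  D.α ≫ (D.Y ◁ f) ≫ (β_ D.Y X).hom ≫ D.αhat

omit [SymmetricCategory C] in
/-- Left whiskering by `X` is injective when `Y ⊗ X ≅ 𝟙`. -/
theorem cancelX {Y X : C} (a : 𝟙_ C ⟶ Y ⊗ X) [IsIso a] {A B : C} (f g : A ⟶ B)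
    (h : X ◁ f = X ◁ g) : f = g := by
  have h2 : (Y ⊗ X) ◁ f = (Y ⊗ X) ◁ g := by
    rw [MonoidalCategory.tensor_whiskerLeft, MonoidalCategory.tensor_whiskerLeft, h]
  have e : (𝟙_ C) ◁ f = (𝟙_ C) ◁ g := by
    rw [← cancel_mono (a ▷ B), whisker_exchange a f, whisker_exchange a g, h2]
  calc f = (λ_ A).inv ≫ (𝟙_ C) ◁ f ≫ (λ_ B).hom := by simp
    _ = (λ_ A).inv ≫ (𝟙_ C) ◁ g ≫ (λ_ B).hom := by rw [e]
    _ = g := by simp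

theorem whiskerLeft_αhat {X : C} (D : LeftDualData X) (hα : IsIso D.α) :
    X ◁ D.αhat = (β_ X (X ⊗ D.Y)).hom ≫ (α_ X D.Y X).hom ≫ (X ◁ inv D.α) := by
  have hX : D.αhat ▷ X = (α_ X D.Y X).hom ≫ (X ◁ inv D.α) ≫ (ρ_ X).hom ≫ (λ_ X).inv := by
    have t := D.triangle₁
    rw [← cancel_epi ((ρ_ X).inv ≫ (X ◁ D.α) ≫ (α_ X D.Y X).inv), ← cancel_mono (λ_ X).hom]
    simp only [Category.assoc, Iso.inv_hom_id, Category.comp_id] at t ⊢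
    rw [t]
    simp [← MonoidalCategory.whiskerLeft_comp_assoc]
  have hb : (β_ X (𝟙_ C)).hom = (ρ_ X).hom ≫ (λ_ X).inv := by
    rw [← braiding_leftUnitor X]; simp
  have nat : X ◁ D.αhat ≫ (β_ X (𝟙_ C)).hom = (β_ X (X ⊗ D.Y)).hom ≫ (D.αhat ▷ X) :=
    BraidedCategory.braiding_naturality_right X D.αhat
  rw [← cancel_mono (β_ X (𝟙_ C)).hom, nat, hX, hb]
  simp

/-- If `X` is invertible (the coevaluation of its left dual is an isomorphism), then
`tr(id_X) ∘ tr(id_X) = id_S`: the trace of the identity is an automorphism of `S` of order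
dividing `2`. -/
theorem tr_id_sq {X : C} (D : LeftDualData X) (hα : IsIso D.α) :
    trOf D (𝟙 X) ≫ trOf D (𝟙 X) = 𝟙 (𝟙_ C) := by
  haveI := hα
  apply cancelX D.α
  simp only [trOf, MonoidalCategory.whiskerLeft_id, Category.id_comp,
    MonoidalCategory.whiskerLeft_comp, Category.assoc, whiskerLeft_αhat D hα,
    MonoidalCategory.whiskerLeft_id]
  -- cancel inv D.α with D.α in the middle, then pure braid identity
  slice_lhs 5 6 => rw [← MonoidalCategory.whiskerLeft_comp, IsIso.inv_hom_id,
    MonoidalCategory.whiskerLeft_id]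
  simp only [Category.id_comp, Category.assoc]
  rw [← cancel_mono (X ◁ D.α)]
  simp only [Category.assoc, ← MonoidalCategory.whiskerLeft_comp, IsIso.inv_hom_id,
    MonoidalCategory.whiskerLeft_id, Category.comp_id]
  simp [BraidedCategory.braiding_tensor_right_hom, ← MonoidalCategory.whiskerLeft_comp_assoc,
    ← MonoidalCategory.whiskerLeft_comp, ← MonoidalCategory.comp_whiskerRight_assoc,
    ← MonoidalCategory.comp_whiskerRight]
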